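/- Let M→N be a matroid perspective on a finite linearly ordered ground set E. Let B ⊆ E be independent in M, let P ⊆ Int_N(B), let Q ⊆ Ext_M(B), and set A = (B∖P) ∪ Q. Then r_M(A) = |B| − |P|. -/

import Mathlib

/-- A circuit of a matroid: a minimal dependent set. -/
def Matroid.IsCircuit' {α : Type*} (M : Matroid α) (C : Set α) : Prop :=
  M.Dep C ∧ ∀ D, M.Dep D → D ⊆ C → D = C

/-- A cocircuit of a matroid: a circuit of the dual matroid. -/
def Matroid.IsCocircuit' {α : Type*} (M : Matroid α) (C : Set α) : Prop :=
  M✶.IsCircuit' C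

/-- The rank of a set in a matroid: the largest cardinality of an independent subset. -/
noncomputable def Matroid.rk' {α : Type*} (M : Matroid α) (A : Set α) : ℕ :=
  sSup {n : ℕ | ∃ I, I ⊆ A ∧ M.Indep I ∧ I.ncard = n}

/-- `e` is the minimum element of the set `C`. -/
def IsMinOf {α : Type*} [LinearOrder α] (C : Set α) (e : α) : Prop :=
  e ∈ C ∧ ∀ x ∈ C, e ≤ x

/-- `Int_M(A)`: internally active elements of `A` w.r.t. `M`
(the ground set is the whole type, so `E ∖ A = Aᶜ`). -/
def IntSet {α : Type*} [LinearOrder α] (M : Matroid α) (A : Set α) : Set α :=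
  {e | e ∈ A ∧ ∃ C, M.IsCocircuit' C ∧ C ⊆ Aᶜ ∪ {e} ∧ IsMinOf C e}

/-- `Ext_M(A)`: externally active elements w.r.t. `M`. -/
def ExtSet {α : Type*} [LinearOrder α] (M : Matroid α) (A : Set α) : Set α :=
  {e | e ∉ A ∧ ∃ C, M.IsCircuit' C ∧ C ⊆ A ∪ {e} ∧ IsMinOf C e}

/-- `P_M(A)`: smallest elements of cocircuits of `M` contained in `E ∖ A`. -/
def PActSet {α : Type*} [LinearOrder α] (M : Matroid α) (A : Set α) : Set α :=
  {e | e ∉ A ∧ ∃ C, M.IsCocircuit' C ∧ C ⊆ Aᶜ ∧ IsMinOf C e}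

/-- `Q_M(A)`: smallest elements of circuits of `M` contained in `A`. -/
def QActSet {α : Type*} [LinearOrder α] (M : Matroid α) (A : Set α) : Set α :=
  {e | e ∈ A ∧ ∃ C, M.IsCircuit' C ∧ C ⊆ A ∧ IsMinOf C e}


section Aux

open Set

/-- The closure of any set is a flat. -/
lemma closure_flat' {α : Type*} (M : Matroid α) (X : Set α) : M.IsFlat (M.closure X) := by
  rw [Matroid.closure_def, sInter_eq_iInter]
  have hne : Nonempty {F // F ∈ {F | M.IsFlat F ∧ X ∩ M.E ⊆ F}} :=
    ⟨⟨M.E, M.ground_isFlat, inter_subset_right⟩⟩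
  exact Matroid.IsFlat.iInter fun F => F.2.1

/-- Every set obtained by deleting a point from a circuit is independent. -/
lemma circuit_diff_indep {α : Type*} (M : Matroid α) {C : Set α} (hC : M.IsCircuit' C)
    {e : α} (he : e ∈ C) : M.Indep (C \ {e}) := by
  by_contra h
  have hdep : M.Dep (C \ {e}) := ⟨h, diff_subset.trans hC.1.subset_ground⟩
  have := hC.2 _ hdep diff_subset
  exact (this ▸ he).2 rfl

/-- Each element of a circuit is in the closure of the rest. -/
lemma circuit_mem_closure {α : Type*} (M : Matroid α) {C : Set α} (hC : M.IsCircuit' C)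
    {e : α} (he : e ∈ C) : e ∈ M.closure (C \ {e}) := by
  have hI := circuit_diff_indep M hC he
  have hdep : M.Dep (insert e (C \ {e})) := by
    rw [Set.insert_diff_singleton, Set.insert_eq_of_mem he]
    exact hC.1
  exact ((hI.insert_dep_iff).mp hdep).1

/-- The complement of a cocircuit is a flat (ground set = univ). -/
lemma cocircuit_compl_flat {α : Type*} (M : Matroid α) (hME : M.E = Set.univ)
    {D : Set α} (hD : M.IsCocircuit' D) : M.IsFlat Dᶜ := by
  have hDE : Dᶜ ⊆ M.E := by rw [hME]; exact subset_univ _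
  have hns : ¬ M.Spanning Dᶜ := by
    intro hs
    have : M.Coindep D := by
      rw [Matroid.coindep_iff_compl_spanning (by rw [hME]; exact subset_univ _)]
      rwa [hME, ← Set.compl_eq_univ_diff]
    exact hD.1.1 this.indep
  have hcl : M.closure Dᶜ = Dᶜ := by
    refine subset_antisymm ?_ (M.subset_closure _ hDE)
    by_contra hsub
    obtain ⟨x, hxcl, hxD⟩ := not_subset.mp hsub
    rw [notMem_compl_iff] at hxD
    -- D \ {x} is dependent in M✶, contradicting minimality of D
    have hdep : M✶.Dep (D \ {x}) := by
      rw [Matroid.dep_iff]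
      refine ⟨fun hi => ?_, by rw [Matroid.dual_ground, hME]; exact subset_univ _⟩
      have hcs : M.Spanning ((D \ {x})ᶜ) := by
        have := (Matroid.coindep_iff_compl_spanning
          (M := M) (I := D \ {x}) (by rw [hME]; exact subset_univ _)).mp hi
        rwa [hME, ← Set.compl_eq_univ_diff] at this
      have hcompl : (D \ {x})ᶜ = insert x Dᶜ := by
        ext y; by_cases hy : y = x <;> simp [hy, Set.mem_insert_iff]
      rw [hcompl] at hcs
      have hcleq : M.closure (insert x Dᶜ) = M.closure Dᶜ :=
        Matroid.closure_insert_eq_of_mem_closure hxcl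
      have hsD : M.Spanning Dᶜ := by
        rw [Matroid.spanning_iff_closure_eq hDE, ← hcleq]
        rw [Matroid.spanning_iff_closure_eq (by rw [hME]; exact subset_univ _)] at hcs
        exact hcs
      exact hns hsD
    have heq := hD.2 _ hdep diff_subset
    rw [← heq] at hxD
    exact hxD.2 rfl
  have := closure_flat' M Dᶜ
  rwa [hcl] at this

/-- If `I` is independent and contained in the closure of an independent set `S`,
then `I.encard ≤ S.encard`. -/
lemma indep_encard_le_of_subset_closure {α : Type*} {M : Matroid α} {I S : Set α}
    (hI : M.Indep I) (hS : M.Indep S) (hIS : I ⊆ M.closure S) : I.encard ≤ S.encard := by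
  obtain ⟨J, hIJ, hJ⟩ := hI.subset_isBasis_of_subset hIS (M.closure_subset_ground S)
  have hSb : M.IsBasis S (M.closure S) := hS.isBasis_closure
  calc I.encard ≤ J.encard := Set.encard_mono hJ
    _ = S.encard := hIJ.encard_eq_encard hSb

end Aux

/-- For a matroid perspective `M → N`, `B` independent in `M`, `P ⊆ Int_N(B)`,
`Q ⊆ Ext_M(B)`, and `A = (B ∖ P) ∪ Q`, we have `r_M(A) = |B| − |P|`. -/
theorem stmt6 {α : Type*} [Fintype α] [LinearOrder α] (M N : Matroid α)
    (hME : M.E = Set.univ) (hNE : N.E = Set.univ)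
    (hMN : ∀ F, N.IsFlat F → M.IsFlat F)
    (B : Set α) (hBi : M.Indep B)
    (P : Set α) (hP : P ⊆ IntSet N B) (Q : Set α) (hQ : Q ⊆ ExtSet M B) :
    M.rk' ((B \ P) ∪ Q) = B.ncard - P.ncard := by
  classical
  have hPB : P ⊆ B := fun p hp => (hP hp).1
  have hBPi : M.Indep (B \ P) := hBi.subset Set.diff_subset
  have hBPE : B \ P ⊆ M.E := by rw [hME]; exact Set.subset_univ _
  -- every q ∈ Q is in the M-closure of B \ P
  have hQcl : ∀ q ∈ Q, q ∈ M.closure (B \ P) := by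
    intro q hq
    have hq' : q ∉ B ∧ ∃ C, M.IsCircuit' C ∧ C ⊆ B ∪ {q} ∧
        (q ∈ C ∧ ∀ x ∈ C, q ≤ x) := hQ hq
    obtain ⟨hqB, C, hC, hCsub, hqC, hqmin⟩ := hq'
    -- C \ {q} ⊆ B \ P
    have hCBP : C \ {q} ⊆ B \ P := by
      rintro y ⟨hyC, hyq⟩
      have hyB : y ∈ B := by
        rcases hCsub hyC with h | h
        · exact h
        · exact absurd h hyq
      refine ⟨hyB, fun hyP => ?_⟩
      have hy' : y ∈ B ∧ ∃ D, N.IsCocircuit' D ∧ D ⊆ Bᶜ ∪ {y} ∧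
          (y ∈ D ∧ ∀ x ∈ D, y ≤ x) := hP hyP
      obtain ⟨-, D, hD, hDsub, hyD, hymin⟩ := hy'
      -- Dᶜ is a flat of N, hence of M
      have hflat : M.IsFlat Dᶜ := hMN _ (cocircuit_compl_flat N hNE hD)
      -- C \ {y} ⊆ Dᶜ
      have hCD : C \ {y} ⊆ Dᶜ := by
        rintro z ⟨hzC, hzy⟩ hzD
        have hz' : z ∉ B := by
          rcases hDsub hzD with h | h
          · exact h
          · exact absurd h hzy
        have hzq : z = q := by
          rcases hCsub hzC with h | h
          · exact absurd h hz'
          · exact h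
        have h1 : y ≤ z := hymin z hzD
        rw [hzq] at h1
        have h2 : q ≤ y := hqmin y hyC
        exact hqB ((le_antisymm h1 h2) ▸ hyB)
      -- y ∈ closure of C \ {y} ⊆ Dᶜ, but y ∈ D
      have hy1 : y ∈ M.closure (C \ {y}) := circuit_mem_closure M hC hyC
      have hy2 : y ∈ Dᶜ := by
        have := (M.closure_subset_closure hCD) hy1
        rwa [hflat.closure] at this
      exact hy2 hyD
    have hq1 : q ∈ M.closure (C \ {q}) := circuit_mem_closure M hC hqC
    exact M.closure_subset_closure hCBP hq1
  -- the whole set A is inside the closure of B \ P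
  have hAcl : (B \ P) ∪ Q ⊆ M.closure (B \ P) := by
    rintro x (hx | hx)
    · exact M.subset_closure _ hBPE hx
    · exact hQcl x hx
  -- compute the rank
  have hub : ∀ n ∈ {n : ℕ | ∃ I, I ⊆ (B \ P) ∪ Q ∧ M.Indep I ∧ I.ncard = n},
      n ≤ (B \ P).ncard := by
    rintro n ⟨I, hIA, hIi, rfl⟩
    have hIcl : I ⊆ M.closure (B \ P) := hIA.trans hAcl
    have := indep_encard_le_of_subset_closure hIi hBPi hIcl
    rw [← (I.toFinite).cast_ncard_eq, ← ((B \ P).toFinite).cast_ncard_eq,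
      Nat.cast_le] at this
    exact this
  have hmem : (B \ P).ncard ∈ {n : ℕ | ∃ I, I ⊆ (B \ P) ∪ Q ∧ M.Indep I ∧ I.ncard = n} :=
    ⟨B \ P, Set.subset_union_left, hBPi, rfl⟩
  have hrk : M.rk' ((B \ P) ∪ Q) = (B \ P).ncard := by
    unfold Matroid.rk'
    exact le_antisymm (csSup_le ⟨_, hmem⟩ hub) (le_csSup ⟨(B \ P).ncard, hub⟩ hmem)
  rw [hrk, Set.ncard_diff hPB]
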